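/- arXiv:2004.02502 — 3 statements merged into one kernel-verified Lean document; each statement's English description precedes it below -/
import Mathlib

section
/- Let f be a Boolean function on disjoint variable sets X and Y admitting an X-partition f = ⋁_{i=1}^n (p_i(X) ∧ s_i(Y)), i.e., the p_i are pairwise inconsistent (p_i ∧ p_j = false for i ≠ j), their disjunction is true, and no p_i is false. If the partition is compressed (s_i ≠ s_j for i ≠ j), then this compressed X-partition is unique: any other compressed X-partition of f has the same set of (prime, sub) pairs. -/
/-- An X-partition of `f : (X → Bool) → (Y → Bool) → Bool`, given as a family of
prime/sub pairs indexed by `Fin n`. -/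
structure IsXPartition {X Y : Type} (f : (X → Bool) → (Y → Bool) → Bool)
    (n : ℕ) (p : Fin n → (X → Bool) → Bool) (s : Fin n → (Y → Bool) → Bool) : Prop where
  pairwise_inconsistent : ∀ i j : Fin n, i ≠ j → ∀ x : X → Bool, ¬(p i x = true ∧ p j x = true)
  exhaustive : ∀ x : X → Bool, ∃ i : Fin n, p i x = true
  nonfalse : ∀ i : Fin n, ∃ x : X → Bool, p i x = true
  decomposes : ∀ (x : X → Bool) (y : Y → Bool),
    f x y = true ↔ ∃ i : Fin n, p i x = true ∧ s i y = true

/-- A sub is determined by any x where the prime holds. -/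
lemma sub_eq_of_common {X Y : Type} {f : (X → Bool) → (Y → Bool) → Bool}
    {n m : ℕ} {p : Fin n → (X → Bool) → Bool} {s : Fin n → (Y → Bool) → Bool}
    {q : Fin m → (X → Bool) → Bool} {r : Fin m → (Y → Bool) → Bool}
    (hp : IsXPartition f n p s) (hq : IsXPartition f m q r)
    {i : Fin n} {j : Fin m} {x : X → Bool} (hpi : p i x = true) (hqj : q j x = true) :
    s i = r j := by
  funext y
  have h1 : s i y = true ↔ f x y = true := by
    rw [hp.decomposes]
    constructor
    · intro h; exact ⟨i, hpi, h⟩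
    · rintro ⟨i', hi', hs'⟩
      rcases eq_or_ne i i' with rfl | hne
      · exact hs'
      · exact absurd ⟨hpi, hi'⟩ (hp.pairwise_inconsistent i i' hne x)
  have h2 : r j y = true ↔ f x y = true := by
    rw [hq.decomposes]
    constructor
    · intro h; exact ⟨j, hqj, h⟩
    · rintro ⟨j', hj', hr'⟩
      rcases eq_or_ne j j' with rfl | hne
      · exact hr'
      · exact absurd ⟨hqj, hj'⟩ (hq.pairwise_inconsistent j j' hne x)
  cases hy : s i y <;> cases hy' : r j y <;> simp_all

lemma partition_range_subset {X Y : Type}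
    (f : (X → Bool) → (Y → Bool) → Bool)
    (n m : ℕ) (p : Fin n → (X → Bool) → Bool) (s : Fin n → (Y → Bool) → Bool)
    (q : Fin m → (X → Bool) → Bool) (r : Fin m → (Y → Bool) → Bool)
    (hp : IsXPartition f n p s) (hq : IsXPartition f m q r)
    (hcomp_s : ∀ i j : Fin n, s i = s j → i = j)
    (hcomp_r : ∀ i j : Fin m, r i = r j → i = j)
    (i : Fin n) :
    (p i, s i) ∈ Set.range (fun j : Fin m => (q j, r j)) := by
  obtain ⟨x, hx⟩ := hp.nonfalse i
  obtain ⟨j, hj⟩ := hq.exhaustive x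
  have hsr : s i = r j := sub_eq_of_common hp hq hx hj
  refine ⟨j, ?_⟩
  have hpq : q j = p i := by
    funext x'
    have fwd : p i x' = true → q j x' = true := by
      intro h
      obtain ⟨j', hj'⟩ := hq.exhaustive x'
      have : r j' = r j := (sub_eq_of_common hp hq h hj').symm.trans hsr |>.symm ▸ rfl
      have := hcomp_r j' j (by rw [← sub_eq_of_common hp hq h hj', hsr])
      rwa [this] at hj'
    have bwd : q j x' = true → p i x' = true := by
      intro h
      obtain ⟨i', hi'⟩ := hp.exhaustive x'
      have := hcomp_s i' i (by rw [sub_eq_of_common hp hq hi' h, hsr])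
      rwa [this] at hi'
    cases h1 : p i x' <;> cases h2 : q j x' <;> simp_all
  simp [hpq, hsr]

/-- the compressed X-partition of a Boolean function is unique
(as a set of prime/sub pairs). -/
theorem compressed_partition_unique {X Y : Type}
    (f : (X → Bool) → (Y → Bool) → Bool)
    (n m : ℕ) (p : Fin n → (X → Bool) → Bool) (s : Fin n → (Y → Bool) → Bool)
    (q : Fin m → (X → Bool) → Bool) (r : Fin m → (Y → Bool) → Bool)
    (hp : IsXPartition f n p s) (hq : IsXPartition f m q r)
    (hcomp_s : ∀ i j : Fin n, s i = s j → i = j)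
    (hcomp_r : ∀ i j : Fin m, r i = r j → i = j) :
    Set.range (fun i : Fin n => (p i, s i)) = Set.range (fun j : Fin m => (q j, r j)) := by
  apply Set.Subset.antisymm <;>
  · rintro _ ⟨i, rfl⟩
    first
    | exact partition_range_subset f _ _ p s q r hp hq hcomp_s hcomp_r i
    | exact partition_range_subset f _ _ q r p s hq hp hcomp_r hcomp_s i
end

section
/- Given Boolean functions f and g over disjoint variable sets X and Y with X-partitions f = ⋁_{i=1}^n (p_i ∧ s_i) and g = ⋁_{j=1}^m (q_j ∧ r_j) (primes pairwise inconsistent, jointly exhaustive, nonfalse), and any binary Boolean operation ∘, the family {((p_i ∧ q_j), (s_i ∘ r_j)) : p_i ∧ q_j ≢ false} is an X-partition of f ∘ g: the primes p_i ∧ q_j are pairwise inconsistent and jointly exhaustive, and (f ∘ g)(x,y) = ⋁_{i,j} ((p_i x ∧ q_j x) ∧ (s_i y ∘ r_j y)). -/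
/-- given X-partitions of `f` and `g` and a binary Boolean operation `op`,
the products `(p_i ∧ q_j, s_i op r_j)` form an X-partition of `f op g`:
the product primes are pairwise inconsistent and jointly exhaustive, and the
decomposition equation holds. -/
theorem apply_partition_product {X Y : Type}
    (f g : (X → Bool) → (Y → Bool) → Bool) (op : Bool → Bool → Bool)
    (n m : ℕ) (p : Fin n → (X → Bool) → Bool) (s : Fin n → (Y → Bool) → Bool)
    (q : Fin m → (X → Bool) → Bool) (r : Fin m → (Y → Bool) → Bool)
    (hp_disj : ∀ i i' : Fin n, i ≠ i' → ∀ x : X → Bool, ¬(p i x = true ∧ p i' x = true))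
    (hp_exh : ∀ x : X → Bool, ∃ i : Fin n, p i x = true)
    (hp_nf : ∀ i : Fin n, ∃ x : X → Bool, p i x = true)
    (hp_dec : ∀ (x : X → Bool) (y : Y → Bool),
      f x y = true ↔ ∃ i : Fin n, p i x = true ∧ s i y = true)
    (hq_disj : ∀ j j' : Fin m, j ≠ j' → ∀ x : X → Bool, ¬(q j x = true ∧ q j' x = true))
    (hq_exh : ∀ x : X → Bool, ∃ j : Fin m, q j x = true)
    (hq_nf : ∀ j : Fin m, ∃ x : X → Bool, q j x = true)
    (hq_dec : ∀ (x : X → Bool) (y : Y → Bool),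
      g x y = true ↔ ∃ j : Fin m, q j x = true ∧ r j y = true) :
    (∀ (ij ij' : Fin n × Fin m), ij ≠ ij' → ∀ x : X → Bool,
      ¬((p ij.1 x && q ij.2 x) = true ∧ (p ij'.1 x && q ij'.2 x) = true)) ∧
    (∀ x : X → Bool, ∃ i : Fin n, ∃ j : Fin m, (p i x && q j x) = true) ∧
    (∀ (x : X → Bool) (y : Y → Bool),
      op (f x y) (g x y) = true ↔
        ∃ i : Fin n, ∃ j : Fin m, (p i x && q j x) = true ∧ op (s i y) (r j y) = true) := by

  have key : ∀ (h : (X → Bool) → (Y → Bool) → Bool) (k : ℕ)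
      (pp : Fin k → (X → Bool) → Bool) (ss : Fin k → (Y → Bool) → Bool),
      (∀ i i' : Fin k, i ≠ i' → ∀ x : X → Bool, ¬(pp i x = true ∧ pp i' x = true)) →
      (∀ (x : X → Bool) (y : Y → Bool),
        h x y = true ↔ ∃ i : Fin k, pp i x = true ∧ ss i y = true) →
      ∀ (i : Fin k) (x : X → Bool) (y : Y → Bool), pp i x = true → h x y = ss i y := by
    intro h k pp ss hdisj hdec i x y hpi
    cases hsi : ss i y with
    | true => exact (hdec x y).mpr ⟨i, hpi, hsi⟩
    | false =>
      by_contra hf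
      simp only [Bool.not_eq_false] at hf
      obtain ⟨i', hpi', hsi'⟩ := (hdec x y).mp hf
      by_cases hii : i' = i
      · subst hii; simp [hsi'] at hsi
      · exact hdisj i' i hii x ⟨hpi', hpi⟩
  refine ⟨?_, ?_, ?_⟩
  · rintro ⟨i, j⟩ ⟨i', j'⟩ hne x ⟨h1, h2⟩
    simp only [Bool.and_eq_true] at h1 h2
    by_cases hii : i = i'
    · by_cases hjj : j = j'
      · exact hne (by simp [hii, hjj])
      · exact hq_disj j j' hjj x ⟨h1.2, h2.2⟩
    · exact hp_disj i i' hii x ⟨h1.1, h2.1⟩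
  · intro x
    obtain ⟨i, hi⟩ := hp_exh x
    obtain ⟨j, hj⟩ := hq_exh x
    exact ⟨i, j, by simp [hi, hj]⟩
  · intro x y
    obtain ⟨i, hi⟩ := hp_exh x
    obtain ⟨j, hj⟩ := hq_exh x
    have hf := key f n p s hp_disj hp_dec i x y hi
    have hg := key g m q r hq_disj hq_dec j x y hj
    constructor
    · intro hop
      exact ⟨i, j, by simp [hi, hj], by rw [← hf, ← hg]; exact hop⟩
    · rintro ⟨i', j', hpq, hop⟩
      simp only [Bool.and_eq_true] at hpq
      have hf' := key f n p s hp_disj hp_dec i' x y hpq.1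
      have hg' := key g m q r hq_disj hq_dec j' x y hpq.2
      rw [hf', hg']; exact hop
end

section
/- For an X-partition {(p_1,s_1),…,(p_n,s_n)} of f over disjoint finite variable sets X and Y, the model count of f equals the sum over i of (model count of p_i) × (model count of s_i). -/
/-- for an X-partition `{(p_i, s_i)}` of `f`, the model count of `f` equals
`∑ i, (model count of p_i) * (model count of s_i)`. -/
theorem partition_model_count {X Y : Type} [Fintype X] [Fintype Y] [DecidableEq X] [DecidableEq Y]
    (f : (X → Bool) → (Y → Bool) → Bool)
    (n : ℕ) (p : Fin n → (X → Bool) → Bool) (s : Fin n → (Y → Bool) → Bool)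
    (hdisj : ∀ i j : Fin n, i ≠ j → ∀ x : X → Bool, ¬(p i x = true ∧ p j x = true))
    (hexh : ∀ x : X → Bool, ∃ i : Fin n, p i x = true)
    (hnf : ∀ i : Fin n, ∃ x : X → Bool, p i x = true)
    (hdec : ∀ (x : X → Bool) (y : Y → Bool),
      f x y = true ↔ ∃ i : Fin n, p i x = true ∧ s i y = true) :
    Fintype.card {xy : (X → Bool) × (Y → Bool) // f xy.1 xy.2 = true} =
      ∑ i : Fin n,
        Fintype.card {x : X → Bool // p i x = true} *
          Fintype.card {y : Y → Bool // s i y = true} := by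
  classical
  let A : Fin n → Finset ((X → Bool) × (Y → Bool)) := fun i =>
    (Finset.univ.filter fun x => p i x = true) ×ˢ (Finset.univ.filter fun y => s i y = true)
  have hset : (Finset.univ.filter fun xy : (X → Bool) × (Y → Bool) => f xy.1 xy.2 = true)
      = Finset.univ.biUnion A := by
    ext xy
    simp [A, Finset.mem_biUnion, hdec xy.1 xy.2, Finset.mem_product]
  have hdisj' : ∀ i ∈ (Finset.univ : Finset (Fin n)), ∀ j ∈ Finset.univ, i ≠ j →
      Disjoint (A i) (A j) := by
    intro i _ j _ hij
    refine Finset.disjoint_left.2 ?_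
    intro xy hxi hxj
    simp only [A, Finset.mem_product, Finset.mem_filter] at hxi hxj
    exact hdisj i j hij xy.1 ⟨hxi.1.2, hxj.1.2⟩
  calc Fintype.card {xy : (X → Bool) × (Y → Bool) // f xy.1 xy.2 = true}
      = (Finset.univ.filter fun xy : (X → Bool) × (Y → Bool) => f xy.1 xy.2 = true).card := by
        rw [Fintype.card_subtype]
    _ = (Finset.univ.biUnion A).card := by rw [hset]
    _ = ∑ i : Fin n, (A i).card := Finset.card_biUnion hdisj'
    _ = ∑ i : Fin n, Fintype.card {x : X → Bool // p i x = true} *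
          Fintype.card {y : Y → Bool // s i y = true} := by
        refine Finset.sum_congr rfl fun i _ => ?_
        rw [Fintype.card_subtype, Fintype.card_subtype]
        simp [A, Finset.card_product]
end
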